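/- There is no graph G with α(G) > |V(G)|/2 and core(G) = ∅. -/
import Mathlib


open Finset

variable {V : Type*} [Fintype V] [DecidableEq V]

/-  A set of vertices is stable (independent) if no two of its vertices are adjacent. -/
def stable (G : SimpleGraph V) (S : Finset V) : Prop :=
  ∀ a ∈ S, ∀ b ∈ S, ¬ G.Adj a b

/-  The (open) neighborhood of a set of vertices. -/
open Classical in
noncomputable def nbhd (G : SimpleGraph V) (A : Finset V) : Finset V :=
  Finset.univ.filter fun v => ∃ a ∈ A, G.Adj a v

/-  The stability number: maximum size of a stable set. -/
open Classical in
noncomputable def alpha (G : SimpleGraph V) : ℕ :=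
  Finset.univ.sup fun S : Finset V => if stable G S then S.card else 0

/-  A maximum stable set. -/
def maxStable (G : SimpleGraph V) (S : Finset V) : Prop :=
  stable G S ∧ S.card = alpha G

/-  core(G): the intersection of all maximum stable sets. -/
open Classical in
noncomputable def core (G : SimpleGraph V) : Finset V :=
  Finset.univ.filter fun v => ∀ S : Finset V, maxStable G S → v ∈ S

/-  A vertex is isolated if it has no neighbors. -/
def isolated (G : SimpleGraph V) (v : V) : Prop := ∀ w, ¬ G.Adj v w

/-  The set of isolated vertices. -/
open Classical in
noncomputable def isol (G : SimpleGraph V) : Finset V :=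
  Finset.univ.filter fun v => isolated G v

/-  There is no graph G with α(G) > |V(G)|/2 and core(G) = ∅. -/
section Aux

lemma stable_subset {G : SimpleGraph V} {S T : Finset V} (h : stable G S) (hT : T ⊆ S) :
    stable G T := fun a ha b hb => h a (hT ha) b (hT hb)

lemma card_le_alpha {G : SimpleGraph V} {S : Finset V} (h : stable G S) : S.card ≤ alpha G := by
  classical
  have := Finset.le_sup (f := fun S : Finset V => if stable G S then S.card else 0)
    (Finset.mem_univ S)
  unfold alpha
  simpa [h] using this

lemma exists_maxStable (G : SimpleGraph V) : ∃ S, maxStable G S := by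
  classical
  obtain ⟨S, -, hS⟩ := Finset.exists_mem_eq_sup (Finset.univ : Finset (Finset V))
    Finset.univ_nonempty (fun S : Finset V => if stable G S then S.card else 0)
  by_cases h : stable G S
  · refine ⟨S, h, ?_⟩
    unfold alpha
    rw [hS, if_pos h]
  · refine ⟨∅, fun a ha => absurd ha (Finset.notMem_empty a), ?_⟩
    unfold alpha
    rw [hS, if_neg h]
    simp

lemma notMem_nbhd_self {G : SimpleGraph V} {I : Finset V} (hI : stable G I) :
    ∀ v ∈ I, v ∉ nbhd G I := by
  intro v hv hmem
  classical
  simp only [nbhd, Finset.mem_filter] at hmem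
  obtain ⟨-, a, ha, hadj⟩ := hmem
  exact hI a ha v hv hadj

lemma nbhd_base {G : SimpleGraph V} {S : Finset V} (hS : maxStable G S) :
    2 * alpha G + (nbhd G S).card ≤ Fintype.card V + S.card := by
  classical
  have hdisj : Disjoint S (nbhd G S) :=
    Finset.disjoint_left.mpr (fun v hv => notMem_nbhd_self hS.1 v hv)
  have : (S ∪ nbhd G S).card ≤ Fintype.card V := by
    simpa using Finset.card_le_card (Finset.subset_univ (S ∪ nbhd G S))
  rw [Finset.card_union_of_disjoint hdisj] at this
  have hcard := hS.2
  omega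

lemma step {G : SimpleGraph V} {I S : Finset V} (hI : stable G I) (hS : maxStable G S)
    (h : 2 * alpha G + (nbhd G I).card ≤ Fintype.card V + I.card) :
    2 * alpha G + (nbhd G (I ∩ S)).card ≤ Fintype.card V + (I ∩ S).card := by
  classical
  set A := S ∩ nbhd G I with hA
  set B := S ∩ I with hB
  set C := S \ (nbhd G I ∪ I) with hC
  -- S decomposes as A ∪ B ∪ C
  have hABdisj : Disjoint A B := by
    rw [Finset.disjoint_left]
    intro v hvA hvB
    rw [hA, Finset.mem_inter] at hvA
    rw [hB, Finset.mem_inter] at hvB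
    exact notMem_nbhd_self hI v hvB.2 hvA.2
  have hdecomp : A.card + B.card + C.card = S.card := by
    have h1 : (S ∩ (nbhd G I ∪ I)).card + (S \ (nbhd G I ∪ I)).card = S.card :=
      Finset.card_inter_add_card_sdiff S (nbhd G I ∪ I)
    have h2 : S ∩ (nbhd G I ∪ I) = A ∪ B := by
      rw [hA, hB, Finset.inter_union_distrib_left]
    rw [h2, Finset.card_union_of_disjoint hABdisj] at h1
    rw [hC]
    omega
  -- T = I ∪ C is stable
  have hTstable : stable G (I ∪ C) := by
    intro a ha b hb hadj
    rw [Finset.mem_union] at ha hb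
    have hCnb : ∀ x ∈ C, x ∉ nbhd G I := by
      intro x hx
      rw [hC, Finset.mem_sdiff, Finset.mem_union] at hx
      tauto
    have hCS : ∀ x ∈ C, x ∈ S := by
      intro x hx
      rw [hC, Finset.mem_sdiff] at hx
      exact hx.1
    rcases ha with ha | ha <;> rcases hb with hb | hb
    · exact hI a ha b hb hadj
    · exact hCnb b hb (by simp [nbhd]; exact ⟨a, ha, hadj⟩)
    · exact hCnb a ha (by simp [nbhd]; exact ⟨b, hb, hadj.symm⟩)
    · exact hS.1 a (hCS a ha) b (hCS b hb) hadj
  have hICdisj : Disjoint I C := by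
    rw [Finset.disjoint_right]
    intro v hv
    rw [hC, Finset.mem_sdiff, Finset.mem_union] at hv
    tauto
  have hT : I.card + C.card ≤ alpha G := by
    have := card_le_alpha hTstable
    rwa [Finset.card_union_of_disjoint hICdisj] at this
  -- key inequality (*) : |I| ≤ |A| + |B|
  have hstar : I.card ≤ A.card + B.card := by
    have := hS.2
    omega
  -- nbhd (I ∩ S) ⊆ nbhd I \ S
  have hsub : nbhd G (I ∩ S) ⊆ nbhd G I \ S := by
    intro v hv
    simp only [nbhd, Finset.mem_filter, Finset.mem_univ, true_and] at hv
    obtain ⟨a, ha, hadj⟩ := hv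
    rw [Finset.mem_inter] at ha
    rw [Finset.mem_sdiff]
    constructor
    · simp only [nbhd, Finset.mem_filter, Finset.mem_univ, true_and]
      exact ⟨a, ha.1, hadj⟩
    · intro hvS
      exact hS.1 a ha.2 v hvS hadj
  have hb := Finset.card_le_card hsub
  have hc : (nbhd G I \ S).card + A.card = (nbhd G I).card := by
    rw [hA, Finset.inter_comm]
    exact Finset.card_sdiff_add_card_inter (nbhd G I) S
  have heq : (I ∩ S).card = B.card := by rw [hB, Finset.inter_comm]
  omega

lemma main_ind (G : SimpleGraph V) (F : Finset (Finset V)) (hF : ∀ S ∈ F, maxStable G S) :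
    ∃ I : Finset V, stable G I ∧ (∀ S ∈ F, I ⊆ S) ∧
      2 * alpha G + (nbhd G I).card ≤ Fintype.card V + I.card := by
  classical
  induction F using Finset.induction_on with
  | empty =>
    obtain ⟨S, hS⟩ := exists_maxStable G
    exact ⟨S, hS.1, by simp, nbhd_base hS⟩
  | @insert a s ha ih =>
    obtain ⟨I, hst, hsub, hineq⟩ := ih (fun S hS => hF S (Finset.mem_insert_of_mem hS))
    have hma : maxStable G a := hF a (Finset.mem_insert_self a s)
    refine ⟨I ∩ a, stable_subset hst Finset.inter_subset_left, ?_, step hst hma hineq⟩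
    intro S hSmem
    rcases Finset.mem_insert.mp hSmem with h | h
    · rw [h]; exact Finset.inter_subset_right
    · exact Finset.inter_subset_left.trans (hsub S h)

end Aux

/-  There is no graph G -/
theorem stmt8 (G : SimpleGraph V) (h1 : Fintype.card V < 2 * alpha G) :
    core G ≠ ∅ := by
  classical
  obtain ⟨I, hst, hsub, hineq⟩ := main_ind G (Finset.univ.filter (fun S => maxStable G S))
    (fun S hS => (Finset.mem_filter.mp hS).2)
  have hIne : I.Nonempty := by
    rw [← Finset.card_pos]
    omega
  obtain ⟨v, hv⟩ := hIne
  have hvcore : v ∈ core G := by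
    simp only [core, Finset.mem_filter, Finset.mem_univ, true_and]
    intro S hS
    exact hsub S (Finset.mem_filter.mpr ⟨Finset.mem_univ S, hS⟩) hv
  exact Finset.ne_empty_of_mem hvcore
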